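/- Assume K ⊆ L satisfy conditions (L0)–(L2). Let U be a K-generic object and let e : a → b be an amalgamable arrow in K. Then for every pair of L-arrows i : b → U and j : b → U there exists an automorphism h : U → U in L satisfying h ∘ i ∘ e = j ∘ e. -/

import Mathlib

open CategoryTheory CategoryTheory.Limits

universe v u

variable {L : Type u} [Category.{v} L]

/-- A subcategory of `L`. -/
structure Subcat (L : Type u) [Category.{v} L] where
  objs : Set L
  homs : ∀ a b : L, Set (a ⟶ b)
  src_mem : ∀ {a b : L} {f : a ⟶ b}, f ∈ homs a b → a ∈ objs
  tgt_mem : ∀ {a b : L} {f : a ⟶ b}, f ∈ homs a b → b ∈ objs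
  id_mem : ∀ a ∈ objs, 𝟙 a ∈ homs a a
  comp_mem : ∀ {a b c : L} {f : a ⟶ b} {g : b ⟶ c},
      f ∈ homs a b → g ∈ homs b c → f ≫ g ∈ homs a c

/-- A countable subcategory. -/
def Subcat.IsCountable (S : Subcat L) : Prop :=
  S.objs.Countable ∧ ∀ a b : L, (S.homs a b).Countable

/-- A sequence in the full subcategory `K` of `L`. -/
def SeqIn (K : Set L) (u : ℕ ⥤ L) : Prop := ∀ n : ℕ, u.obj n ∈ K

/-- (L0): all `L`-arrows are monic. -/
def CondL0 (L : Type u) [Category.{v} L] : Prop := ∀ ⦃X Y : L⦄ (f : X ⟶ Y), Mono f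

/-- (L1): every sequence in `K` has a colimit in `L`, and every `L`-object is the
colimit of a sequence in `K`. -/
def CondL1 (K : Set L) : Prop :=
  (∀ u : ℕ ⥤ L, SeqIn K u → ∃ c : Cocone u, Nonempty (IsColimit c)) ∧
  (∀ X : L, ∃ u : ℕ ⥤ L, SeqIn K u ∧ ∃ c : Cocone u, c.pt = X ∧ Nonempty (IsColimit c))

/-- (L2): every `K`-object is `ω`-small in `L` (for sequences in `K`). -/
def CondL2 (K : Set L) : Prop :=
  ∀ a ∈ K, ∀ u : ℕ ⥤ L, SeqIn K u → ∀ c : Cocone u, IsColimit c →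
    ∀ f : a ⟶ c.pt, ∃ (n : ℕ) (f' : a ⟶ u.obj n), f' ≫ c.ι.app n = f

/-- `U` is weakly `K`-injective. -/
def WeaklyInjective (K : Set L) (U : L) : Prop :=
  ∀ a ∈ K, ∀ e : a ⟶ U, ∃ b ∈ K, ∃ i : a ⟶ b,
    ∀ y ∈ K, ∀ f : b ⟶ y, ∃ g : y ⟶ U, i ≫ f ≫ g = e

/-- `U` is `K`-generic: every `K`-object admits an arrow into `U`, and `U` is
weakly `K`-injective. -/
def IsGeneric (K : Set L) (U : L) : Prop :=
  (∀ x ∈ K, Nonempty (x ⟶ U)) ∧ WeaklyInjective K U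

/-- A weak Fraïssé sequence in the full subcategory `K` of `L`: (G1) and (G2)
relative to `K`. -/
def IsWeakFraisseSeqIn (K : Set L) (u : ℕ ⥤ L) : Prop :=
  (∀ x ∈ K, ∃ n : ℕ, Nonempty (x ⟶ u.obj n)) ∧
  (∀ n : ℕ, ∃ (m : ℕ) (hnm : n ≤ m), ∀ y ∈ K, ∀ f : u.obj m ⟶ y,
    ∃ (k : ℕ) (hmk : m ≤ k) (g : y ⟶ u.obj k),
      u.map (homOfLE hnm) ≫ f ≫ g = u.map (homOfLE (hnm.trans hmk)))

/-- The full subcategory `K` is directed. -/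
def DirectedIn (K : Set L) : Prop :=
  ∀ x ∈ K, ∀ y ∈ K, ∃ z ∈ K, Nonempty (x ⟶ z) ∧ Nonempty (y ⟶ z)

/-- An arrow between `K`-objects that is amalgamable in the full subcategory `K`. -/
def AmalgamableIn (K : Set L) {z z' : L} (e : z ⟶ z') : Prop :=
  ∀ x ∈ K, ∀ y ∈ K, ∀ (f : z' ⟶ x) (g : z' ⟶ y),
    ∃ w ∈ K, ∃ (f' : x ⟶ w) (g' : y ⟶ w), e ≫ f ≫ f' = e ≫ g ≫ g'

/-- The full subcategory `K` has the weak amalgamation property. -/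
def HasWAPIn (K : Set L) : Prop :=
  ∀ z ∈ K, ∃ z' ∈ K, ∃ e : z ⟶ z', AmalgamableIn K e

/-- `S` is a weakly dominating subcategory of the full subcategory `K`. -/
def WeaklyDominatingIn (K : Set L) (S : Subcat L) : Prop :=
  S.objs ⊆ K ∧
  (∀ x ∈ K, ∃ y ∈ S.objs, Nonempty (x ⟶ y)) ∧
  (∀ y ∈ S.objs, ∃ (y' : L) (j : y ⟶ y'), j ∈ S.homs y y' ∧
    ∀ z ∈ K, ∀ f : y' ⟶ z, ∃ w ∈ K, ∃ g : z ⟶ w, j ≫ f ≫ g ∈ S.homs y w)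

/-- The full subcategory `K` is a weak Fraïssé category: directed, WAP, and weakly
dominated by a countable subcategory. -/
def IsWeakFraisseCatIn (K : Set L) : Prop :=
  DirectedIn K ∧ HasWAPIn K ∧
    ∃ S : Subcat L, S.IsCountable ∧ WeaklyDominatingIn K S

namespace Homog16

variable {L : Type u} [Category.{v} L]

/-- Cocone over a `ℕ`-indexed functor from consecutive compatibilities. -/
def coconeOfSucc (F : ℕ ⥤ L) (X : L) (app : ∀ n, F.obj n ⟶ X)
    (w : ∀ n, F.map (homOfLE (Nat.le_succ n)) ≫ app (n + 1) = app n) : Cocone F where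
  pt := X
  ι := NatTrans.ofSequence (G := (Functor.const ℕ).obj X) app (by
    intro n
    simpa using w n)

@[simp] lemma coconeOfSucc_ι_app (F : ℕ ⥤ L) (X : L) (app : ∀ n, F.obj n ⟶ X)
    (w : ∀ n, F.map (homOfLE (Nat.le_succ n)) ≫ app (n + 1) = app n) (k : ℕ) :
    (coconeOfSucc F X app w).ι.app k = app k := rfl

variable (u : ℕ ⥤ L)

/-- Restriction of a cocone along a monotone reindexing. -/
def subCocone (c : Cocone u) {φ : ℕ → ℕ} (hm : Monotone φ) : Cocone (hm.functor ⋙ u) where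
  pt := c.pt
  ι := { app := fun k => c.ι.app (φ k)
         naturality := by
           intro k k' f
           simpa using c.w (hm.functor.map f) }

/-- A cofinal restriction of a colimit cocone is a colimit cocone. -/
def subIsColimit (c : Cocone u) (hc : IsColimit c) {φ : ℕ → ℕ} (hm : Monotone φ)
    (hφ : ∀ k, k ≤ φ k) : IsColimit (subCocone u c hm) where
  desc s := hc.desc (coconeOfSucc u s.pt (fun n => u.map (homOfLE (hφ n)) ≫ s.ι.app n) (by
    intro n
    have hs : u.map (homOfLE (hm (Nat.le_succ n))) ≫ s.ι.app (n + 1) = s.ι.app n :=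
      s.w (homOfLE (Nat.le_succ n))
    show u.map _ ≫ u.map (homOfLE (hφ (n + 1))) ≫ s.ι.app (n + 1)
        = u.map (homOfLE (hφ n)) ≫ s.ι.app n
    erw [← hs, ← Category.assoc, ← Category.assoc, ← u.map_comp, ← u.map_comp, homOfLE_comp]))
  fac s k := by
    show c.ι.app (φ k) ≫ _ = _
    erw [hc.fac]
    have hs := s.w (homOfLE (hφ k))
    exact hs
  uniq s m hm' := by
    refine hc.uniq (coconeOfSucc u s.pt (fun n => u.map (homOfLE (hφ n)) ≫ s.ι.app n) _) m ?_
    intro n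
    have h1 : c.ι.app n ≫ m = u.map (homOfLE (hφ n)) ≫ (c.ι.app (φ n) ≫ m) := by
      exact (congrArg (· ≫ m) (c.w (homOfLE (hφ n)))).symm.trans (Category.assoc _ _ _)
    have h2 : c.ι.app (φ n) ≫ m = s.ι.app n := hm' n
    erw [h1, h2]
    rfl

lemma exists_absorb (K : Set L) (h0 : CondL0 L) (h2 : CondL2 K)
    (hu : SeqIn K u) (c : Cocone u) (hc : IsColimit c)
    (hinj : WeaklyInjective K c.pt) (n : ℕ) :
    ∃ m, ∃ hnm : n ≤ m, ∀ y ∈ K, ∀ f : u.obj m ⟶ y,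
      ∃ k, ∃ hmk : m ≤ k, ∃ g : y ⟶ u.obj k,
        u.map (homOfLE hnm) ≫ f ≫ g = u.map (homOfLE (hnm.trans hmk)) := by
  obtain ⟨b, hbK, ι, P⟩ := hinj (u.obj n) (hu n) (c.ι.app n)
  obtain ⟨g0, hg0⟩ := P b hbK (𝟙 b)
  rw [Category.id_comp] at hg0
  obtain ⟨m0, q0, hq0⟩ := h2 b hbK u hu c hc g0
  refine ⟨max m0 n, le_max_right _ _, ?_⟩
  set m := max m0 n with hm
  set q : b ⟶ u.obj m := q0 ≫ u.map (homOfLE (le_max_left m0 n)) with hqdef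
  have hq : ι ≫ q = u.map (homOfLE (le_max_right m0 n : n ≤ max m0 n)) := by
    have : Mono (c.ι.app m) := h0 _
    rw [← cancel_mono (c.ι.app m)]
    rw [hqdef]
    have hw1 : u.map (homOfLE (le_max_left m0 n)) ≫ c.ι.app m = c.ι.app m0 :=
      c.w (homOfLE (le_max_left m0 n))
    have hw2 : u.map (homOfLE (le_max_right m0 n : n ≤ max m0 n)) ≫ c.ι.app m = c.ι.app n :=
      c.w _
    rw [Category.assoc, Category.assoc, hw1, hq0, hg0, hw2]
  intro y hy f
  obtain ⟨g1, hg1⟩ := P y hy (q ≫ f)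
  obtain ⟨k0, g2, hg2⟩ := h2 y hy u hu c hc g1
  refine ⟨max k0 m, le_max_right _ _, g2 ≫ u.map (homOfLE (le_max_left k0 m)), ?_⟩
  have : Mono (c.ι.app (max k0 m)) := h0 _
  rw [← cancel_mono (c.ι.app (max k0 m))]
  have hw3 : u.map (homOfLE (le_max_left k0 m)) ≫ c.ι.app (max k0 m) = c.ι.app k0 := c.w _
  have hw4 : u.map (homOfLE ((le_max_right m0 n).trans (le_max_right k0 m)
      : n ≤ max k0 m)) ≫ c.ι.app (max k0 m) = c.ι.app n := c.w _
  calc (u.map (homOfLE (le_max_right m0 n : n ≤ m)) ≫ f ≫ g2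
          ≫ u.map (homOfLE (le_max_left k0 m))) ≫ c.ι.app (max k0 m)
      = (ι ≫ q) ≫ f ≫ g2 ≫ (u.map (homOfLE (le_max_left k0 m)) ≫ c.ι.app (max k0 m)) := by
        rw [hq]; simp only [Category.assoc]
    _ = ι ≫ (q ≫ f) ≫ (g2 ≫ c.ι.app k0) := by rw [hw3]; simp only [Category.assoc]
    _ = c.ι.app n := by rw [hg2, hg1]
    _ = u.map (homOfLE _) ≫ c.ι.app (max k0 m) := hw4.symm

/-- The state of the zig-zag construction. -/
structure ZZSt (u : ℕ ⥤ L) (M : ℕ → ℕ) where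
  p : ℕ
  q : ℕ
  hpq : p < q
  hMq : M p ≤ q
  f : u.obj (M p) ⟶ u.obj q

variable (K : Set L) (hu : SeqIn K u) (M : ℕ → ℕ) (hMle : ∀ n, n ≤ M n)
variable (hM : ∀ n, ∀ y ∈ K, ∀ f : u.obj (M n) ⟶ y, ∃ k, ∃ h : M n ≤ k, ∃ g : y ⟶ u.obj k,
        u.map (homOfLE (hMle n)) ≫ f ≫ g = u.map (homOfLE ((hMle n).trans h)))

noncomputable def zzNext (s : ZZSt u M) : ZZSt u M where
  p := s.q
  q := max (hM s.p (u.obj (M s.q)) (hu (M s.q)) (s.f ≫ u.map (homOfLE (hMle s.q)))).choose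
        (M s.q) + 1
  hpq := Nat.lt_succ_of_le ((hMle s.q).trans (le_max_right _ _))
  hMq := (le_max_right _ _).trans (Nat.le_succ _)
  f := (hM s.p (u.obj (M s.q)) (hu (M s.q))
          (s.f ≫ u.map (homOfLE (hMle s.q)))).choose_spec.choose_spec.choose
        ≫ u.map (homOfLE ((le_max_left _ _).trans (Nat.le_succ _)))

lemma zz_le (s : ZZSt u M) : s.p ≤ (zzNext u K hu M hMle hM s).q :=
  le_of_lt (lt_trans s.hpq (zzNext u K hu M hMle hM s).hpq)

lemma zzNext_spec (s : ZZSt u M) :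
    u.map (homOfLE (hMle s.p)) ≫ s.f ≫ u.map (homOfLE (hMle s.q))
        ≫ (zzNext u K hu M hMle hM s).f
      = u.map (homOfLE (zz_le u K hu M hMle hM s)) := by
  set H := hM s.p (u.obj (M s.q)) (hu (M s.q)) (s.f ≫ u.map (homOfLE (hMle s.q))) with hH
  have hg := H.choose_spec.choose_spec.choose_spec
  show u.map _ ≫ s.f ≫ u.map _ ≫ (H.choose_spec.choose_spec.choose ≫ u.map _) = _
  have := congrArg (fun z => z ≫ u.map (homOfLE
    ((le_max_left H.choose (M s.q)).trans (Nat.le_succ _)))) hg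
  simp only [Category.assoc] at this ⊢
  rw [this, ← u.map_comp, homOfLE_comp]
  rfl

noncomputable def zzChain (s0 : ZZSt u M) : ℕ → ZZSt u M :=
  fun k => Nat.rec s0 (fun _ s => zzNext u K hu M hMle hM s) k

/-- The index sequence of the zig-zag. -/
noncomputable def nIdx (s0 : ZZSt u M) (k : ℕ) : ℕ := (zzChain u K hu M hMle hM s0 k).p

lemma nIdx_lt (s0 : ZZSt u M) (k : ℕ) :
    nIdx u K hu M hMle hM s0 k < nIdx u K hu M hMle hM s0 (k + 1) :=
  (zzChain u K hu M hMle hM s0 k).hpq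

lemma nIdx_mono (s0 : ZZSt u M) : StrictMono (nIdx u K hu M hMle hM s0) :=
  strictMono_nat_of_lt_succ (nIdx_lt u K hu M hMle hM s0)

/-- The zig-zag arrows. -/
noncomputable def Phi (s0 : ZZSt u M) (k : ℕ) :
    u.obj (nIdx u K hu M hMle hM s0 k) ⟶ u.obj (nIdx u K hu M hMle hM s0 (k + 1)) :=
  u.map (homOfLE (hMle _)) ≫ (zzChain u K hu M hMle hM s0 k).f

lemma Phi_comp (s0 : ZZSt u M) (k : ℕ) :
    Phi u K hu M hMle hM s0 k ≫ Phi u K hu M hMle hM s0 (k + 1)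
      = u.map (homOfLE ((nIdx_mono u K hu M hMle hM s0).monotone (by omega : k ≤ k + 2))) := by
  have := zzNext_spec u K hu M hMle hM (zzChain u K hu M hMle hM s0 k)
  show (u.map _ ≫ (zzChain u K hu M hMle hM s0 k).f) ≫ (u.map _ ≫ _) = _
  simp only [Category.assoc]
  exact this

/-- The back-and-forth: a zig-zag induces an automorphism of the colimit. -/
lemma zigzag_iso (c : Cocone u) (hc : IsColimit c)
    (nn : ℕ → ℕ) (hmono : StrictMono nn)
    (Φ : ∀ k, u.obj (nn k) ⟶ u.obj (nn (k + 1)))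
    (hcomp : ∀ k, Φ k ≫ Φ (k + 1)
      = u.map (homOfLE (hmono.monotone (by omega : k ≤ k + 2)))) :
    ∃ h : c.pt ≅ c.pt, c.ι.app (nn 0) ≫ h.hom = Φ 0 ≫ c.ι.app (nn 1) := by
  have key : ∀ k, Φ k ≫ Φ (k + 1) ≫ c.ι.app (nn (k + 2)) = c.ι.app (nn k) := fun k => by
    rw [← Category.assoc, hcomp k, c.w]
  have hme : Monotone fun k => nn (2 * k) := fun k k' h => hmono.monotone (by omega)
  have hφe : ∀ k, k ≤ nn (2 * k) := fun k => le_trans (by omega) hmono.le_apply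
  have hmo : Monotone fun k => nn (2 * k + 1) := fun k k' h => hmono.monotone (by omega)
  have hφo : ∀ k, k ≤ nn (2 * k + 1) := fun k => le_trans (by omega) hmono.le_apply
  have keyE : ∀ k, Φ (2*k+1) ≫ Φ (2*k+2) ≫ c.ι.app (nn (2*k+3)) = c.ι.app (nn (2*k+1)) :=
    fun k => key (2*k+1)
  have keyO : ∀ k, Φ (2*k+2) ≫ Φ (2*k+3) ≫ c.ι.app (nn (2*k+4)) = c.ι.app (nn (2*k+2)) :=
    fun k => key (2*k+2)
  have hcompE : ∀ k, Φ (2*k) ≫ Φ (2*k+1)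
      = u.map (homOfLE (hmono.monotone (by omega : 2*k ≤ 2*k+2))) := fun k => hcomp (2*k)
  have hcompO : ∀ k, Φ (2*k+1) ≫ Φ (2*k+2)
      = u.map (homOfLE (hmono.monotone (by omega : 2*k+1 ≤ 2*k+3))) := fun k => hcomp (2*k+1)
  let CE : Cocone (hme.functor ⋙ u) := coconeOfSucc _ c.pt
    (fun k => Φ (2*k) ≫ c.ι.app (nn (2*k+1)))
    (fun k => by
      show u.map (homOfLE (hmono.monotone (by omega : 2*k ≤ 2*k+2)))
          ≫ Φ (2*k+2) ≫ c.ι.app (nn (2*k+3))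
          = Φ (2*k) ≫ c.ι.app (nn (2*k+1))
      rw [← hcompE k, Category.assoc, keyE k])
  let CO : Cocone (hmo.functor ⋙ u) := coconeOfSucc _ c.pt
    (fun k => Φ (2*k+1) ≫ c.ι.app (nn (2*k+2)))
    (fun k => by
      show u.map (homOfLE (hmono.monotone (by omega : 2*k+1 ≤ 2*k+3)))
          ≫ Φ (2*k+3) ≫ c.ι.app (nn (2*k+4))
          = Φ (2*k+1) ≫ c.ι.app (nn (2*k+2))
      rw [← hcompO k, Category.assoc, keyO k])
  let hE : IsColimit (subCocone u c hme) := subIsColimit u c hc hme hφe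
  let hO : IsColimit (subCocone u c hmo) := subIsColimit u c hc hmo hφo
  let h : c.pt ⟶ c.pt := hE.desc CE
  let h' : c.pt ⟶ c.pt := hO.desc CO
  have facE : ∀ k, c.ι.app (nn (2*k)) ≫ h = Φ (2*k) ≫ c.ι.app (nn (2*k+1)) :=
    fun k => hE.fac CE k
  have facO : ∀ k, c.ι.app (nn (2*k+1)) ≫ h' = Φ (2*k+1) ≫ c.ι.app (nn (2*k+2)) :=
    fun k => hO.fac CO k
  have hh' : h ≫ h' = 𝟙 c.pt := by
    apply hE.hom_ext
    intro k
    show c.ι.app (nn (2*k)) ≫ h ≫ h' = c.ι.app (nn (2*k)) ≫ 𝟙 c.pt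
    have main : c.ι.app (nn (2*k)) ≫ h ≫ h' = c.ι.app (nn (2*k)) := by
      rw [← Category.assoc, facE k, Category.assoc, facO k, ← Category.assoc, hcompE k]
      exact c.w _
    rw [main]
    simp
  have h'h : h' ≫ h = 𝟙 c.pt := by
    apply hO.hom_ext
    intro k
    show c.ι.app (nn (2*k+1)) ≫ h' ≫ h = c.ι.app (nn (2*k+1)) ≫ 𝟙 c.pt
    have facE' : c.ι.app (nn (2*k+2)) ≫ h = Φ (2*k+2) ≫ c.ι.app (nn (2*k+3)) := facE (k+1)
    have main : c.ι.app (nn (2*k+1)) ≫ h' ≫ h = c.ι.app (nn (2*k+1)) := by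
      rw [← Category.assoc, facO k, Category.assoc, facE', ← Category.assoc, hcompO k]
      exact c.w _
    rw [main]
    simp
  exact ⟨⟨h, h', hh', h'h⟩, facE 0⟩

include K hu hM in
/-- Existence of the automorphism, given a suitable initial state. -/
lemma main_aux (c : Cocone u) (hc : IsColimit c)
    {a b : L} (e : a ⟶ b) (st0 : ZZSt u M) (i0 j0 : b ⟶ u.obj st0.p)
    (hinit : e ≫ i0 ≫ u.map (homOfLE (hMle st0.p)) ≫ st0.f
        = e ≫ j0 ≫ u.map (homOfLE (le_of_lt st0.hpq))) :
    ∃ h : c.pt ≅ c.pt, e ≫ (i0 ≫ c.ι.app st0.p) ≫ h.hom = e ≫ (j0 ≫ c.ι.app st0.p) := by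
  obtain ⟨h, hfac⟩ := zigzag_iso u c hc (nIdx u K hu M hMle hM st0)
    (nIdx_mono u K hu M hMle hM st0) (Phi u K hu M hMle hM st0)
    (Phi_comp u K hu M hMle hM st0)
  refine ⟨h, ?_⟩
  have hfac' : c.ι.app st0.p ≫ h.hom
      = (u.map (homOfLE (hMle st0.p)) ≫ st0.f) ≫ c.ι.app (nIdx u K hu M hMle hM st0 1) := hfac
  have hw : u.map (homOfLE (le_of_lt st0.hpq)) ≫ c.ι.app (nIdx u K hu M hMle hM st0 1)
      = c.ι.app st0.p := c.w _
  calc e ≫ (i0 ≫ c.ι.app st0.p) ≫ h.hom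
      = e ≫ i0 ≫ (c.ι.app st0.p ≫ h.hom) := by simp only [Category.assoc]
    _ = e ≫ i0 ≫ (u.map (homOfLE (hMle st0.p)) ≫ st0.f)
          ≫ c.ι.app (nIdx u K hu M hMle hM st0 1) := by rw [hfac']
    _ = (e ≫ i0 ≫ u.map (homOfLE (hMle st0.p)) ≫ st0.f)
          ≫ c.ι.app (nIdx u K hu M hMle hM st0 1) := by
          exact ((Category.assoc _ _ _).trans (congrArg (e ≫ ·) (Category.assoc _ _ _))).symm
    _ = (e ≫ j0 ≫ u.map (homOfLE (le_of_lt st0.hpq)))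
          ≫ c.ι.app (nIdx u K hu M hMle hM st0 1) := by rw [hinit]
    _ = e ≫ j0 ≫ (u.map (homOfLE (le_of_lt st0.hpq))
          ≫ c.ι.app (nIdx u K hu M hMle hM st0 1)) := by
          exact (Category.assoc _ _ _).trans (congrArg (e ≫ ·) (Category.assoc _ _ _))
    _ = e ≫ (j0 ≫ c.ι.app st0.p) := by rw [hw]

end Homog16

/-- weak homogeneity of the `K`-generic object: given an amalgamable
`K`-arrow `e : a ⟶ b` and `L`-arrows `i, j : b ⟶ U`, there is an automorphism `h`
of `U` with `h ∘ i ∘ e = j ∘ e`. -/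
theorem generic_weakly_homogeneous (K : Set L)
    (h0 : CondL0 L) (h1 : CondL1 K) (h2 : CondL2 K)
    (U : L) (hU : IsGeneric K U)
    {a b : L} (ha : a ∈ K) (hb : b ∈ K) (e : a ⟶ b)
    (he : AmalgamableIn K e) (i j : b ⟶ U) :
    ∃ h : U ≅ U, e ≫ i ≫ h.hom = e ≫ j := by

  obtain ⟨hex, hinj⟩ := hU
  obtain ⟨u, hu, c, hpt, ⟨hc⟩⟩ := h1.2 U
  subst hpt
  choose M hMle hM using Homog16.exists_absorb u K h0 h2 hu c hc hinj
  obtain ⟨t1, i1, hi1⟩ := h2 b hb u hu c hc i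
  obtain ⟨t2, j1, hj1⟩ := h2 b hb u hu c hc j
  obtain ⟨w, hw, α, β, hαβ⟩ := he (u.obj (M (max t1 t2))) (hu _) (u.obj (M (max t1 t2))) (hu _)
      ((i1 ≫ u.map (homOfLE (le_max_left t1 t2))) ≫ u.map (homOfLE (hMle (max t1 t2))))
      ((j1 ≫ u.map (homOfLE (le_max_right t1 t2))) ≫ u.map (homOfLE (hMle (max t1 t2))))
  obtain ⟨k1, hk1, ρ, hρ⟩ := hM (max t1 t2) w hw β
  have hinit : e ≫ (i1 ≫ u.map (homOfLE (le_max_left t1 t2)))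
        ≫ u.map (homOfLE (hMle (max t1 t2)))
        ≫ (α ≫ ρ ≫ u.map (homOfLE (Nat.le_succ k1)))
      = e ≫ (j1 ≫ u.map (homOfLE (le_max_right t1 t2)))
        ≫ u.map (homOfLE (((hMle (max t1 t2)).trans hk1).trans (Nat.le_succ k1))) := by
    have h1 := congrArg (fun z => z ≫ ρ ≫ u.map (homOfLE (Nat.le_succ k1))) hαβ
    have h2 := congrArg (fun z => z ≫ u.map (homOfLE (Nat.le_succ k1))) hρ
    simp only [Category.assoc] at h1 h2 ⊢
    rw [← u.map_comp, homOfLE_comp] at h2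
    rw [h1, h2]
  obtain ⟨h, hh⟩ := Homog16.main_aux u K hu M hMle hM c hc e
      (⟨max t1 t2, k1 + 1, Nat.lt_succ_of_le ((hMle _).trans hk1), hk1.trans (Nat.le_succ _),
        α ≫ ρ ≫ u.map (homOfLE (Nat.le_succ k1))⟩ : Homog16.ZZSt u M)
      (i1 ≫ u.map (homOfLE (le_max_left t1 t2)))
      (j1 ≫ u.map (homOfLE (le_max_right t1 t2)))
      hinit
  refine ⟨h, ?_⟩
  have hii : (i1 ≫ u.map (homOfLE (le_max_left t1 t2))) ≫ c.ι.app (max t1 t2) = i := by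
    rw [Category.assoc, c.w]
    exact hi1
  have hjj : (j1 ≫ u.map (homOfLE (le_max_right t1 t2))) ≫ c.ι.app (max t1 t2) = j := by
    rw [Category.assoc, c.w]
    exact hj1
  rw [← hii, ← hjj]
  exact hh
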